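/- Let K be an absorptive, fully-continuous commutative semiring and let P ∈ K[X] be a univariate polynomial (with polynomial evaluation x ↦ P(x)). Then P(0) is the least solution of the equation X = P(X): we have P(P(0)) = P(0), and for every a ∈ K with P(a) = a it holds that P(0) ≤ a in the natural order. -/

import Mathlib

/-- An absorptive, fully-continuous commutative semiring: a commutative semiring
whose natural order (`a ≤ b ↔ a + b = b`) is a complete lattice, with `1 + a = 1`,
and such that addition and multiplication commute with suprema and infima of
nonempty chains. -/
class AbsorptiveFC (K : Type*) extends CommSemiring K, CompleteLattice K where
  absorb : ∀ a : K, 1 + a = 1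
  le_iff_add : ∀ a b : K, a ≤ b ↔ a + b = b
  add_sSup_chain : ∀ (a : K) (C : Set K), C.Nonempty → IsChain (· ≤ ·) C →
    a + sSup C = sSup ((fun c => a + c) '' C)
  add_sInf_chain : ∀ (a : K) (C : Set K), C.Nonempty → IsChain (· ≤ ·) C →
    a + sInf C = sInf ((fun c => a + c) '' C)
  mul_sSup_chain : ∀ (a : K) (C : Set K), C.Nonempty → IsChain (· ≤ ·) C →
    a * sSup C = sSup ((fun c => a * c) '' C)
  mul_sInf_chain : ∀ (a : K) (C : Set K), C.Nonempty → IsChain (· ≤ ·) C →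
    a * sInf C = sInf ((fun c => a * c) '' C)

/-- The infinitary power `a^∞ = ⨅ n, a ^ n`. -/
noncomputable def ipow {K : Type*} [AbsorptiveFC K] (a : K) : K := ⨅ n : ℕ, a ^ n


section Aux
variable {K : Type*} [AbsorptiveFC K]

private lemma leiff (a b : K) : a ≤ b ↔ a + b = b := AbsorptiveFC.le_iff_add a b

private lemma kzero_le (a : K) : (0:K) ≤ a := (leiff 0 a).2 (zero_add a)

private lemma kidem (a : K) : a + a = a := by
  have h : (1:K) + 1 = 1 := AbsorptiveFC.absorb 1
  calc a + a = a * (1 + 1) := by ring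
    _ = a := by rw [h, mul_one]

private lemma kadd_le {a b c : K} (h1 : a ≤ c) (h2 : b ≤ c) : a + b ≤ c := by
  rw [leiff] at *
  rw [add_assoc, h2, h1]

private lemma kadd_mono {a b : K} (c : K) (h : a ≤ b) : a + c ≤ b + c := by
  rw [leiff] at *
  calc (a + c) + (b + c) = (a + b) + (c + c) := by ring
    _ = b + c := by rw [h, kidem]

private lemma kadd_le_add {a b c d : K} (h1 : a ≤ b) (h2 : c ≤ d) : a + c ≤ b + d := by
  calc a + c ≤ b + c := kadd_mono c h1
    _ = c + b := add_comm _ _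
    _ ≤ d + b := kadd_mono b h2
    _ = b + d := add_comm _ _

private lemma kmul_mono {a b : K} (c : K) (h : a ≤ b) : a * c ≤ b * c := by
  rw [leiff] at *
  calc a * c + b * c = (a + b) * c := by ring
    _ = b * c := by rw [h]

private lemma kmul_le_left (a b : K) : a * b ≤ a := by
  rw [leiff]
  calc a * b + a = a * (1 + b) := by ring
    _ = a := by rw [AbsorptiveFC.absorb, mul_one]

private lemma kmul_le_right (a b : K) : a * b ≤ b := by
  rw [mul_comm]; exact kmul_le_left b a

private lemma kpow_le_self (a : K) {i : ℕ} (hi : i ≠ 0) : a ^ i ≤ a := by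
  obtain ⟨n, rfl⟩ := Nat.exists_eq_succ_of_ne_zero hi
  rw [pow_succ, mul_comm]
  exact kmul_le_left a _

private lemma kpow_mono {x y : K} (h : x ≤ y) (i : ℕ) : x ^ i ≤ y ^ i := by
  induction i with
  | zero => simp
  | succ n ih =>
    rw [pow_succ, pow_succ]
    calc x ^ n * x ≤ y ^ n * x := kmul_mono x ih
      _ = x * y ^ n := mul_comm _ _
      _ ≤ y * y ^ n := kmul_mono _ h
      _ = y ^ n * y := mul_comm _ _

private lemma ksum_le {ι : Type*} {s : Finset ι} {f : ι → K} {c : K}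
    (h : ∀ i ∈ s, f i ≤ c) : (∑ i ∈ s, f i) ≤ c := by
  classical
  induction s using Finset.induction_on with
  | empty => simpa using kzero_le c
  | insert a s' hx ih =>
    rw [Finset.sum_insert hx]
    exact kadd_le (h a (Finset.mem_insert_self a s'))
      (ih fun i hi => h i (Finset.mem_insert_of_mem hi))

private lemma ksum_le_sum {ι : Type*} {s : Finset ι} {f g : ι → K}
    (h : ∀ i ∈ s, f i ≤ g i) : (∑ i ∈ s, f i) ≤ ∑ i ∈ s, g i := by
  classical
  induction s using Finset.induction_on with
  | empty => simp
  | insert a s' hx ih =>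
    rw [Finset.sum_insert hx, Finset.sum_insert hx]
    exact kadd_le_add (h a (Finset.mem_insert_self a s'))
      (ih fun i hi => h i (Finset.mem_insert_of_mem hi))

private lemma keval_mono (P : Polynomial K) {x y : K} (h : x ≤ y) :
    P.eval x ≤ P.eval y := by
  rw [Polynomial.eval_eq_sum_range, Polynomial.eval_eq_sum_range]
  exact ksum_le_sum fun i _ => by
    simpa [mul_comm] using kmul_mono (P.coeff i) (kpow_mono h i)

end Aux

/-- over an absorptive, fully-continuous commutative semiring,
`P(0)` is the least solution of the univariate equation `X = P(X)`. -/
theorem lfp_one_dim {K : Type*} [AbsorptiveFC K] (P : Polynomial K) :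
    P.eval (P.eval 0) = P.eval 0 ∧ ∀ a : K, P.eval a = a → P.eval 0 ≤ a := by
  constructor
  · apply le_antisymm
    · rw [Polynomial.eval_eq_sum_range (x := P.eval 0)]
      apply ksum_le
      intro i _
      rcases Nat.eq_zero_or_pos i with hi | hi
      · subst hi
        simp [Polynomial.coeff_zero_eq_eval_zero]
      · exact (kmul_le_right _ _).trans (kpow_le_self _ hi.ne')
    · exact keval_mono P (kzero_le _)
  · intro a ha
    calc P.eval 0 ≤ P.eval a := keval_mono P (kzero_le a)
      _ = a := ha
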